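/- Let κ : ℝ → ℝ be continuously differentiable and let 𝔲 : ℝ × ℝ × ℝ → ℝ be twice continuously differentiable (jointly in (t,𝔵,z)) satisfying, for all (t,𝔵,z), the embedding PDE ∂_t 𝔲 = (∂_𝔵 + ∂_z)[ κ(z)·(∂_𝔵𝔲 + ∂_z𝔲) ], equivalently ∂_t𝔲 = ∂_z(κ(z)∂_z𝔲) + (2κ(z)∂_z + κ'(z))∂_𝔵𝔲 + κ(z)∂_𝔵²𝔲. Then for every phase φ ∈ ℝ, the field u_φ(t,x) := 𝔲(t, x, x + φ) satisfies the heterogeneous diffusion PDE ∂_t u_φ(t,x) = ∂_x[ κ(x + φ)·∂_x u_φ(t,x) ] for all (t,x). -/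

import Mathlib

/-- The phase-shift embedding of Section 4: if `𝔲(t,𝔵,z)` satisfies the
embedding PDE `∂_t 𝔲 = (∂_𝔵 + ∂_z)[κ(z)(𝔲_𝔵 + 𝔲_z)]` on the cylindrical
domain, then for every phase `φ` the diagonal field `u_φ(t,x) := 𝔲(t,x,x+φ)`
satisfies the heterogeneous diffusion PDE `∂_t u_φ = ∂_x[κ(x+φ) ∂_x u_φ]`. -/
theorem phase_shift_embedding
    (κ : ℝ → ℝ) (hκ : ContDiff ℝ 1 κ)
    (u : ℝ → ℝ → ℝ → ℝ)
    (hu : ContDiff ℝ 2 (fun p : ℝ × ℝ × ℝ => u p.1 p.2.1 p.2.2))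
    (hpde : ∀ t x z,
      deriv (fun s => u s x z) t =
        deriv (fun y => κ z *
          (deriv (fun y' => u t y' z) y + deriv (fun w => u t y w) z)) x
        + deriv (fun w => κ w *
          (deriv (fun y' => u t y' w) x + deriv (fun w' => u t x w') w)) z) :
    ∀ φ t x,
      deriv (fun s => u s x (x + φ)) t =
        deriv (fun y => κ (y + φ) * deriv (fun y' => u t y' (y' + φ)) y) x := by
  intro φ t x
  set F : ℝ × ℝ × ℝ → ℝ := fun p => u p.1 p.2.1 p.2.2 with hF
  have hFd : Differentiable ℝ F := hu.differentiable (by norm_num)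
  set P : ℝ × ℝ × ℝ → ℝ := fun p => fderiv ℝ F p (0, 1, 0) with hPdef
  set Q : ℝ × ℝ × ℝ → ℝ := fun p => fderiv ℝ F p (0, 0, 1) with hQdef
  have hfder : ContDiff ℝ 1 (fun p => fderiv ℝ F p) :=
    hu.fderiv_right (le_refl _)
  have hP : ContDiff ℝ 1 P := hfder.clm_apply contDiff_const
  have hQ : ContDiff ℝ 1 Q := hfder.clm_apply contDiff_const
  set g : ℝ × ℝ × ℝ → ℝ := fun p => κ p.2.2 * (P p + Q p) with hgdef
  have hgC : ContDiff ℝ 1 g :=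
    (hκ.comp (contDiff_snd.comp contDiff_snd)).mul (hP.add hQ)
  have hgd : Differentiable ℝ g := hgC.differentiable one_ne_zero
  -- partial derivative identities
  have hPx : ∀ t y z, deriv (fun y' => u t y' z) y = P (t, y, z) := by
    intro t y z
    have hc : HasDerivAt (fun y' : ℝ => ((t, y', z) : ℝ × ℝ × ℝ)) (0, 1, 0) y :=
      (hasDerivAt_const y t).prodMk ((hasDerivAt_id y).prodMk (hasDerivAt_const y z))
    exact ((hFd (t, y, z)).hasFDerivAt.comp_hasDerivAt y hc).deriv
  have hQz : ∀ t y z, deriv (fun w => u t y w) z = Q (t, y, z) := by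
    intro t y z
    have hc : HasDerivAt (fun w : ℝ => ((t, y, w) : ℝ × ℝ × ℝ)) (0, 0, 1) z :=
      (hasDerivAt_const z t).prodMk ((hasDerivAt_const z y).prodMk (hasDerivAt_id z))
    exact ((hFd (t, y, z)).hasFDerivAt.comp_hasDerivAt z hc).deriv
  have hvec : ((0, 1, 1) : ℝ × ℝ × ℝ) = (0, 1, 0) + (0, 0, 1) := by
    simp [Prod.ext_iff]
  have hdiag : ∀ y, deriv (fun y' => u t y' (y' + φ)) y
      = P (t, y, y + φ) + Q (t, y, y + φ) := by
    intro y
    have hc : HasDerivAt (fun y' : ℝ => ((t, y', y' + φ) : ℝ × ℝ × ℝ)) (0, 1, 1) y :=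
      (hasDerivAt_const y t).prodMk
        ((hasDerivAt_id y).prodMk ((hasDerivAt_id y).add_const φ))
    have h1 : deriv (fun y' => u t y' (y' + φ)) y
        = fderiv ℝ F (t, y, y + φ) (0, 1, 1) := by
      exact ((hFd (t, y, y + φ)).hasFDerivAt.comp_hasDerivAt y hc).deriv
    rw [h1, hvec, (fderiv ℝ F (t, y, y + φ)).map_add]
  -- partial derivatives of g
  have hgx : ∀ z, deriv (fun y => κ z *
      (deriv (fun y' => u t y' z) y + deriv (fun w => u t y w) z)) x
      = fderiv ℝ g (t, x, z) (0, 1, 0) := by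
    intro z
    have heq : (fun y => κ z *
        (deriv (fun y' => u t y' z) y + deriv (fun w => u t y w) z))
        = g ∘ (fun y : ℝ => ((t, y, z) : ℝ × ℝ × ℝ)) := by
      funext y; rw [hPx, hQz]; rfl
    rw [heq]
    have hc : HasDerivAt (fun y : ℝ => ((t, y, z) : ℝ × ℝ × ℝ)) (0, 1, 0) x :=
      (hasDerivAt_const x t).prodMk ((hasDerivAt_id x).prodMk (hasDerivAt_const x z))
    exact ((hgd (t, x, z)).hasFDerivAt.comp_hasDerivAt x hc).deriv
  have hgz : ∀ z, deriv (fun w => κ w *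
      (deriv (fun y' => u t y' w) x + deriv (fun w' => u t x w') w)) z
      = fderiv ℝ g (t, x, z) (0, 0, 1) := by
    intro z
    have heq : (fun w => κ w *
        (deriv (fun y' => u t y' w) x + deriv (fun w' => u t x w') w))
        = g ∘ (fun w : ℝ => ((t, x, w) : ℝ × ℝ × ℝ)) := by
      funext w; rw [hPx, hQz]; rfl
    rw [heq]
    have hc : HasDerivAt (fun w : ℝ => ((t, x, w) : ℝ × ℝ × ℝ)) (0, 0, 1) z :=
      (hasDerivAt_const z t).prodMk ((hasDerivAt_const z x).prodMk (hasDerivAt_id z))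
    exact ((hgd (t, x, z)).hasFDerivAt.comp_hasDerivAt z hc).deriv
  have hgdiag : deriv (fun y => κ (y + φ) * deriv (fun y' => u t y' (y' + φ)) y) x
      = fderiv ℝ g (t, x, x + φ) (0, 1, 0) + fderiv ℝ g (t, x, x + φ) (0, 0, 1) := by
    have heq : (fun y => κ (y + φ) * deriv (fun y' => u t y' (y' + φ)) y)
        = g ∘ (fun y : ℝ => ((t, y, y + φ) : ℝ × ℝ × ℝ)) := by
      funext y; rw [hdiag]; rfl
    rw [heq]
    have hc : HasDerivAt (fun y : ℝ => ((t, y, y + φ) : ℝ × ℝ × ℝ)) (0, 1, 1) x :=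
      (hasDerivAt_const x t).prodMk
        ((hasDerivAt_id x).prodMk ((hasDerivAt_id x).add_const φ))
    rw [((hgd (t, x, x + φ)).hasFDerivAt.comp_hasDerivAt x hc).deriv, hvec,
      (fderiv ℝ g (t, x, x + φ)).map_add]
  rw [hpde t x (x + φ), hgx (x + φ), hgz (x + φ), hgdiag]
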